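/- Let γ, θ : K → Ann_K(J) be additive maps satisfying γ(J) = θ(J) = 0, γ(x₁)x₂ = γ(x₂)x₁, and x₁θ(x₂) = x₂θ(x₁) for all x₁, x₂ ∈ K. Then the map Δ̄ : R → R defined by Δ̄(x e_{2,1}) = γ(x) e_{n,2}, Δ̄(x e_{n,n−1}) = θ(x) e_{n−1,1}, and Δ̄(x_{i,j} e_{i,j}) = 0 for (i,j) ≠ (2,1), (n,n−1) (extended additively over entries) is a Lie derivation of R. -/

import Mathlib

/-- Membership in `R = R_n(K,J)`: entries on and above the main diagonal lie in `J`. -/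
def Rmem {K : Type*} [Ring K] {n : ℕ} (J : AddSubgroup K)
    (M : Matrix (Fin n) (Fin n) K) : Prop :=
  ∀ i j : Fin n, i ≤ j → M i j ∈ J

/-- A Lie derivation of `R = R_n(K,J)`. -/
def IsLieDerOn {K : Type*} [Ring K] {n : ℕ} (J : AddSubgroup K)
    (D : Matrix (Fin n) (Fin n) K → Matrix (Fin n) (Fin n) K) : Prop :=
  (∀ A, Rmem J A → Rmem J (D A)) ∧
  (∀ A B, Rmem J A → Rmem J B → D (A + B) = D A + D B) ∧
  (∀ A B, Rmem J A → Rmem J B →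
    D (A * B - B * A) = (D A * B - B * D A) + (A * D B - D B * A))

theorem mul_entry_mem {K : Type*} [Ring K] {n : ℕ} (J : AddSubgroup K)
    (hJl : ∀ r : K, ∀ y ∈ J, r * y ∈ J) (hJr : ∀ r : K, ∀ y ∈ J, y * r ∈ J)
    {A B : Matrix (Fin n) (Fin n) K} (hA : Rmem J A) (hB : Rmem J B)
    (i j : Fin n) (h : ∀ k : Fin n, i ≤ k ∨ k ≤ j) : (A * B) i j ∈ J := by
  rw [Matrix.mul_apply]
  exact AddSubgroup.sum_mem J fun k _ =>
    (h k).elim (fun hk => hJr _ _ (hA i k hk)) (fun hk => hJl _ _ (hB k j hk))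

theorem aux_special_I {K : Type*} [Ring K] {n : ℕ} (hn : 3 ≤ n)
    (J : AddSubgroup K)
    (hJl : ∀ r : K, ∀ y ∈ J, r * y ∈ J) (hJr : ∀ r : K, ∀ y ∈ J, y * r ∈ J)
    (γ θ : K →+ K)
    (hγA : ∀ x : K, ∀ y ∈ J, γ x * y = 0 ∧ y * γ x = 0)
    (hθA : ∀ x : K, ∀ y ∈ J, θ x * y = 0 ∧ y * θ x = 0)
    (hγJ : ∀ y ∈ J, γ y = 0) (hθJ : ∀ y ∈ J, θ y = 0)
    (hγsym : ∀ x₁ x₂ : K, γ x₁ * x₂ = γ x₂ * x₁)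
    (hθsym : ∀ x₁ x₂ : K, x₁ * θ x₂ = x₂ * θ x₁)
    (p q z o : Fin n) (hp : (p : ℕ) = n - 1) (hq : (q : ℕ) = n - 2)
    (hz : (z : ℕ) = 0) (ho : (o : ℕ) = 1) :
    IsLieDerOn J (fun M : Matrix (Fin n) (Fin n) K =>
      Matrix.single p o (γ (M o z)) +
        Matrix.single q z (θ (M p q))) := by
  refine ⟨?_, ?_, ?_⟩
  · intro A hA i j hij
    rw [Fin.le_def] at hij
    have hi := i.isLt
    simp only [Matrix.add_apply, Matrix.single, Matrix.of_apply]
    have h1 : ¬ (p = i ∧ o = j) := by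
      rintro ⟨rfl, rfl⟩; omega
    have h2 : ¬ (q = i ∧ z = j) := by
      rintro ⟨rfl, rfl⟩; omega
    rw [if_neg h1, if_neg h2, add_zero]
    exact J.zero_mem
  · intro A B hA hB
    simp only [Matrix.add_apply, map_add, Matrix.single_add]
    abel
  · intro A B hA hB
    have hozk : ∀ k : Fin n, o ≤ k ∨ k ≤ z := fun k => by
      rw [Fin.le_def, Fin.le_def]; omega
    have hpqk : ∀ k : Fin n, p ≤ k ∨ k ≤ q := fun k => by
      have := k.isLt; rw [Fin.le_def, Fin.le_def]; omega
    have e1 : γ ((A * B - B * A) o z) = 0 := by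
      refine hγJ _ ?_
      rw [Matrix.sub_apply]
      exact J.sub_mem (mul_entry_mem J hJl hJr hA hB o z hozk)
        (mul_entry_mem J hJl hJr hB hA o z hozk)
    have e2 : θ ((A * B - B * A) p q) = 0 := by
      refine hθJ _ ?_
      rw [Matrix.sub_apply]
      exact J.sub_mem (mul_entry_mem J hJl hJr hA hB p q hpqk)
        (mul_entry_mem J hJl hJr hB hA p q hpqk)
    simp only [e1, e2, Matrix.single_zero, add_zero]
    symm
    have hip : ∀ i : Fin n, i ≤ p := fun i => by
      have := i.isLt; rw [Fin.le_def]; omega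
    have hzj : ∀ j : Fin n, z ≤ j := fun j => by rw [Fin.le_def]; omega
    have Z1 : Matrix.single q z (θ (A p q)) * B = 0 := by
      ext i j
      rcases eq_or_ne i q with rfl | h
      · rw [Matrix.single_mul_apply_same, Matrix.zero_apply]
        exact (hθA _ _ (hB z j (hzj j))).1
      · rw [Matrix.single_mul_apply_of_ne _ _ _ _ _ h, Matrix.zero_apply]
    have Z4 : Matrix.single q z (θ (B p q)) * A = 0 := by
      ext i j
      rcases eq_or_ne i q with rfl | h
      · rw [Matrix.single_mul_apply_same, Matrix.zero_apply]
        exact (hθA _ _ (hA z j (hzj j))).1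
      · rw [Matrix.single_mul_apply_of_ne _ _ _ _ _ h, Matrix.zero_apply]
    have Z2 : B * Matrix.single p o (γ (A o z)) = 0 := by
      ext i j
      rcases eq_or_ne j o with rfl | h
      · rw [Matrix.mul_single_apply_same, Matrix.zero_apply]
        exact (hγA _ _ (hB i p (hip i))).2
      · rw [Matrix.mul_single_apply_of_ne _ _ _ _ _ h, Matrix.zero_apply]
    have Z3 : A * Matrix.single p o (γ (B o z)) = 0 := by
      ext i j
      rcases eq_or_ne j o with rfl | h
      · rw [Matrix.mul_single_apply_same, Matrix.zero_apply]
        exact (hγA _ _ (hA i p (hip i))).2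
      · rw [Matrix.mul_single_apply_of_ne _ _ _ _ _ h, Matrix.zero_apply]
    rw [add_mul, add_mul, mul_add, mul_add, Z1, Z2, Z3, Z4, add_zero, zero_add, add_zero,
      zero_add]
    ext i j
    simp only [Matrix.add_apply, Matrix.sub_apply, Matrix.zero_apply]
    rcases eq_or_ne i p with rfl | hipne
    · rcases eq_or_ne j z with rfl | hjzne
      · rw [Matrix.single_mul_apply_same, Matrix.single_mul_apply_same,
          Matrix.mul_single_apply_same, Matrix.mul_single_apply_same,
          hγsym, hθsym]
        abel
      · have hj : (j : ℕ) ≠ 0 := fun h => hjzne (Fin.ext (by omega))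
        have hoj : o ≤ j := by rw [Fin.le_def]; omega
        rw [Matrix.single_mul_apply_same, Matrix.single_mul_apply_same,
          Matrix.mul_single_apply_of_ne _ _ _ _ _ hjzne,
          Matrix.mul_single_apply_of_ne _ _ _ _ _ hjzne,
          (hγA _ _ (hB o j hoj)).1, (hγA _ _ (hA o j hoj)).1]
        abel
    · rcases eq_or_ne j z with rfl | hjzne
      · have hi : (i : ℕ) ≠ n - 1 := fun h => hipne (Fin.ext (by omega))
        have hiq : i ≤ q := by have := i.isLt; rw [Fin.le_def]; omega
        rw [Matrix.single_mul_apply_of_ne _ _ _ _ _ hipne,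
          Matrix.single_mul_apply_of_ne _ _ _ _ _ hipne,
          Matrix.mul_single_apply_same, Matrix.mul_single_apply_same,
          (hθA _ _ (hB i q hiq)).2, (hθA _ _ (hA i q hiq)).2]
        abel
      · rw [Matrix.single_mul_apply_of_ne _ _ _ _ _ hipne,
          Matrix.single_mul_apply_of_ne _ _ _ _ _ hipne,
          Matrix.mul_single_apply_of_ne _ _ _ _ _ hjzne,
          Matrix.mul_single_apply_of_ne _ _ _ _ _ hjzne]
        abel

/-- The special map of type I, `[a_{i,j}] ↦ γ(a_{2,1}) e_{n,2} + θ(a_{n,n-1}) e_{n-1,1}`,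
is a Lie derivation of `R` when `γ, θ : K → Ann_K(J)` are additive, vanish on `J`, and satisfy
`γ(x₁)x₂ = γ(x₂)x₁` and `x₁θ(x₂) = x₂θ(x₁)`. -/
theorem special_lie_derivation_type_I {K : Type*} [Ring K] {n : ℕ} (hn : 3 ≤ n)
    (h2 : ∀ a : K, a + a = 0 → a = 0)
    (J : AddSubgroup K)
    (hJl : ∀ r : K, ∀ y ∈ J, r * y ∈ J) (hJr : ∀ r : K, ∀ y ∈ J, y * r ∈ J)
    (γ θ : K →+ K)
    (hγA : ∀ x : K, ∀ y ∈ J, γ x * y = 0 ∧ y * γ x = 0)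
    (hθA : ∀ x : K, ∀ y ∈ J, θ x * y = 0 ∧ y * θ x = 0)
    (hγJ : ∀ y ∈ J, γ y = 0) (hθJ : ∀ y ∈ J, θ y = 0)
    (hγsym : ∀ x₁ x₂ : K, γ x₁ * x₂ = γ x₂ * x₁)
    (hθsym : ∀ x₁ x₂ : K, x₁ * θ x₂ = x₂ * θ x₁) :
    IsLieDerOn J (fun M : Matrix (Fin n) (Fin n) K =>
      Matrix.single ⟨n - 1, by omega⟩ ⟨1, by omega⟩ (γ (M ⟨1, by omega⟩ ⟨0, by omega⟩)) +
        Matrix.single ⟨n - 2, by omega⟩ ⟨0, by omega⟩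
          (θ (M ⟨n - 1, by omega⟩ ⟨n - 2, by omega⟩))) :=
  aux_special_I hn J hJl hJr γ θ hγA hθA hγJ hθJ hγsym hθsym _ _ _ _ rfl rfl rfl rfl
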